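/- Let G = ℤ³ with positive cone P = {(x, y, z) ∈ ℤ³ : ((x > 0) or (x = 0 and y = 0)) and z ≥ 0} and u = (1, 0, 1). Then: (a) (G, P) is a partially ordered abelian group and u is an order unit; (b) the subgroup generated by (0, 1, −1) is singular, i.e., ℤ·(0, 1, −1) ∩ P = {0}; (c) every state ρ of (G, P, u) satisfies ρ(0, 1, 0) = 0; consequently every state ρ with ρ(0, 1, −1) = 0 satisfies ρ(0, 0, 1) = 0, and since (0, 0, 1) ∈ P \ {0}, no faithful state of (G, P, u) vanishes on (0, 1, −1). -/
import Mathlib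

lemma aux_state_kills (ρ : ℤ × ℤ × ℤ →+ ℝ) (hu : ρ (1, 0, 1) = 1)
    (hpos : ∀ n : ℤ, 0 ≤ ρ (1, n, 1)) : ρ (0, 1, 0) = 0 := by
  have key : ∀ n : ℤ, 0 ≤ 1 + (n : ℝ) * ρ (0, 1, 0) := by
    intro n
    have h1 : ((1, n, 1) : ℤ × ℤ × ℤ) = (1, 0, 1) + n • (0, 1, 0) := by
      simp [Prod.ext_iff]
    have h2 := hpos n
    rw [h1, map_add, map_zsmul, hu] at h2
    simpa [zsmul_eq_mul] using h2
  by_contra hc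
  have habs : (0 : ℝ) < |ρ (0, 1, 0)| := abs_pos.mpr hc
  obtain ⟨n, hn⟩ := exists_int_gt (1 / |ρ (0, 1, 0)|)
  have hn0 : (0 : ℝ) < n := lt_trans (by positivity) hn
  have hgt : 1 < (n : ℝ) * |ρ (0, 1, 0)| := by
    rw [div_lt_iff₀ habs] at hn; linarith
  have hle : (n : ℝ) * |ρ (0, 1, 0)| ≤ 1 := by
    have hp := key n
    have hm := key (-n)
    push_cast at hm
    rcases abs_cases (ρ (0, 1, 0)) with ⟨h, _⟩ | ⟨h, _⟩ <;> rw [h] <;> nlinarith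
  linarith

theorem stmt_10
    (P : Set (ℤ × ℤ × ℤ))
    (hP : P = {p : ℤ × ℤ × ℤ | (0 < p.1 ∨ (p.1 = 0 ∧ p.2.1 = 0)) ∧ 0 ≤ p.2.2}) :
    (((0 : ℤ × ℤ × ℤ) ∈ P) ∧
     (∀ a ∈ P, ∀ b ∈ P, a + b ∈ P) ∧
     (∀ a : ℤ × ℤ × ℤ, a ∈ P → -a ∈ P → a = 0) ∧
     ((1, 0, 1) : ℤ × ℤ × ℤ) ∈ P ∧
     (∀ x : ℤ × ℤ × ℤ, ∃ n : ℕ, n • ((1, 0, 1) : ℤ × ℤ × ℤ) - x ∈ P)) ∧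
    (∀ k : ℤ, k • ((0, 1, -1) : ℤ × ℤ × ℤ) ∈ P →
      k • ((0, 1, -1) : ℤ × ℤ × ℤ) = 0) ∧
    (∀ ρ : ℤ × ℤ × ℤ →+ ℝ, ρ (1, 0, 1) = 1 → (∀ a ∈ P, 0 ≤ ρ a) →
      ρ (0, 1, 0) = 0 ∧ (ρ (0, 1, -1) = 0 → ρ (0, 0, 1) = 0)) ∧
    (((0, 0, 1) : ℤ × ℤ × ℤ) ∈ P ∧ ((0, 0, 1) : ℤ × ℤ × ℤ) ≠ 0) ∧
    (∀ ρ : ℤ × ℤ × ℤ →+ ℝ, ρ (1, 0, 1) = 1 → (∀ a ∈ P, 0 ≤ ρ a) →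
      (∀ a ∈ P, a ≠ 0 → 0 < ρ a) → ρ (0, 1, -1) ≠ 0) := by
  subst hP
  have state_killer : ∀ ρ : ℤ × ℤ × ℤ →+ ℝ, ρ (1, 0, 1) = 1 →
      (∀ a ∈ {p : ℤ × ℤ × ℤ | (0 < p.1 ∨ (p.1 = 0 ∧ p.2.1 = 0)) ∧ 0 ≤ p.2.2}, 0 ≤ ρ a) →
      ρ (0, 1, 0) = 0 ∧ (ρ (0, 1, -1) = 0 → ρ (0, 0, 1) = 0) := by
    intro ρ hu hpos
    have h0 : ρ (0, 1, 0) = 0 := by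
      apply aux_state_kills ρ hu
      intro n
      exact hpos (1, n, 1) (by constructor <;> simp)
    refine ⟨h0, fun hk => ?_⟩
    have hsplit : ((0, 1, -1) : ℤ × ℤ × ℤ) = (0, 1, 0) - (0, 0, 1) := by
      simp [Prod.ext_iff]
    rw [hsplit, map_sub, h0] at hk
    linarith
  refine ⟨⟨?_, ?_, ?_, ?_, ?_⟩, ?_, state_killer, ⟨?_, ?_⟩, ?_⟩
  · constructor <;> simp
  · rintro a ⟨ha1, ha2⟩ b ⟨hb1, hb2⟩
    constructor
    · simp only [Prod.fst_add, Prod.snd_add]; omega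
    · simp only [Prod.fst_add, Prod.snd_add]; omega
  · rintro ⟨a1, a2, a3⟩ h h'
    simp only [Set.mem_setOf_eq, Prod.fst_neg, Prod.snd_neg] at h h'
    obtain ⟨h1, h2⟩ := h
    obtain ⟨h3, h4⟩ := h'
    have hz : a1 = 0 ∧ a2 = 0 ∧ a3 = 0 := by omega
    simp [Prod.ext_iff, hz.1, hz.2.1, hz.2.2]
  · constructor <;> simp
  · rintro ⟨a, b, c⟩
    refine ⟨a.natAbs + c.natAbs + 1, ?_⟩
    have hs : (a.natAbs + c.natAbs + 1) • ((1, 0, 1) : ℤ × ℤ × ℤ) =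
        ((a.natAbs + c.natAbs + 1 : ℤ), 0, (a.natAbs + c.natAbs + 1 : ℤ)) := by
      simp [Prod.ext_iff]
    rw [hs]
    refine ⟨Or.inl ?_, ?_⟩ <;> simp only [Prod.fst_sub, Prod.snd_sub] <;> omega
  · intro k ⟨h1, h2⟩
    simp only [Prod.smul_fst, Prod.smul_snd, smul_eq_mul, Set.mem_setOf_eq] at h1 h2 ⊢
    have : k = 0 := by omega
    simp [this]
  · constructor <;> simp
  · simp [Prod.ext_iff]
  · intro ρ hu hpos hfaith hk
    obtain ⟨h0, himp⟩ := state_killer ρ hu hpos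
    have := hfaith (0, 0, 1) (by constructor <;> simp) (by simp [Prod.ext_iff])
    have := himp hk
    linarith
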